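/- Suppose γ_re < γ_rm and fix P_s ≥ 0. Then for every P_r ≥ 0, R(P_s, P_r) ≤ R(P_s, P_s·γ_sr/γ_rm). (Theorem 1, relay side: for fixed source power, the secure rate over a subcarrier is maximized at the relay power P_r = P_s·γ_sr/γ_rm, i.e. when P_s·γ_sr = P_r·γ_rm.) -/

import Mathlib

/-- Per-subcarrier DF secure rate:
`R(P_s, P_r) = (1/2)·max(0, min(log₂(1 + P_s·γ_sr/σ²), log₂(1 + P_r·γ_rm/σ²)) − log₂(1 + P_r·γ_re/σ²))`. -/
noncomputable def secRate (σ2 γsr γrm γre Ps Pr : ℝ) : ℝ :=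
  (1 / 2) * max 0 (min (Real.logb 2 (1 + Ps * γsr / σ2)) (Real.logb 2 (1 + Pr * γrm / σ2))
    - Real.logb 2 (1 + Pr * γre / σ2))

lemma diff_logb_mono (σ2 a b : ℝ) (hσ : 0 < σ2) (ha : 0 ≤ a) (hb : 0 ≤ b) (hab : b ≤ a)
    {P Q : ℝ} (hP : 0 ≤ P) (hPQ : P ≤ Q) :
    Real.logb 2 (1 + P * a / σ2) - Real.logb 2 (1 + P * b / σ2)
      ≤ Real.logb 2 (1 + Q * a / σ2) - Real.logb 2 (1 + Q * b / σ2) := by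
  have hQ : 0 ≤ Q := hP.trans hPQ
  have h1 : 0 < 1 + P * a / σ2 := by positivity
  have h2 : 0 < 1 + P * b / σ2 := by positivity
  have h3 : 0 < 1 + Q * a / σ2 := by positivity
  have h4 : 0 < 1 + Q * b / σ2 := by positivity
  rw [sub_le_sub_iff, ← Real.logb_mul (by positivity) (by positivity),
      ← Real.logb_mul (by positivity) (by positivity)]
  apply Real.logb_le_logb_of_le (by norm_num) (by positivity)
  have key : (a - b) * P ≤ (a - b) * Q := mul_le_mul_of_nonneg_left hPQ (by linarith)
  have e : (1 + P * a / σ2) * (1 + Q * b / σ2) - (1 + Q * a / σ2) * (1 + P * b / σ2)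
      = ((P * a + Q * b) - (Q * a + P * b)) / σ2 := by field_simp; ring
  have h5 : ((P * a + Q * b) - (Q * a + P * b)) / σ2 ≤ 0 :=
    div_nonpos_of_nonpos_of_nonneg (by nlinarith) hσ.le
  linarith

/-- Theorem 1, relay side: for fixed source power `P_s ≥ 0` and `γ_re < γ_rm`,
the secure rate is maximized at the relay power `P_r = P_s·γ_sr/γ_rm`, i.e.
`R(P_s, P_r) ≤ R(P_s, P_s·γ_sr/γ_rm)` for every `P_r ≥ 0`. -/
theorem secRate_le_of_fixed_source_power (σ2 γsr γrm γre Ps : ℝ)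
    (hσ2 : 0 < σ2) (hsr : 0 < γsr) (hrm : 0 < γrm) (hre : 0 < γre)
    (hgain : γre < γrm) (hPs : 0 ≤ Ps) :
    ∀ Pr : ℝ, 0 ≤ Pr →
      secRate σ2 γsr γrm γre Ps Pr ≤ secRate σ2 γsr γrm γre Ps (Ps * γsr / γrm) := by
  intro Pr hPr
  set Q := Ps * γsr / γrm with hQdef
  have hQ0 : 0 ≤ Q := by positivity
  have hQrm : Q * γrm = Ps * γsr := by rw [hQdef]; field_simp [hrm.ne']
  unfold secRate
  apply mul_le_mul_of_nonneg_left _ (by norm_num)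
  apply max_le (le_max_left _ _)
  apply le_max_of_le_right
  rw [hQrm, min_self]
  rcases le_total Pr Q with h | h
  · calc min (Real.logb 2 (1 + Ps * γsr / σ2)) (Real.logb 2 (1 + Pr * γrm / σ2))
          - Real.logb 2 (1 + Pr * γre / σ2)
        ≤ Real.logb 2 (1 + Pr * γrm / σ2) - Real.logb 2 (1 + Pr * γre / σ2) := by
          gcongr; exact min_le_right _ _
      _ ≤ Real.logb 2 (1 + Q * γrm / σ2) - Real.logb 2 (1 + Q * γre / σ2) :=
          diff_logb_mono σ2 γrm γre hσ2 hrm.le hre.le hgain.le hPr h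
      _ = Real.logb 2 (1 + Ps * γsr / σ2) - Real.logb 2 (1 + Q * γre / σ2) := by rw [hQrm]
  · apply sub_le_sub (min_le_left _ _)
    apply Real.logb_le_logb_of_le (by norm_num) (by positivity)
    have : Q * γre ≤ Pr * γre := mul_le_mul_of_nonneg_right h hre.le
    gcongr
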